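/- For every integer p ≥ 1, every real number x, and every n ≥ 0: n! times the coefficient of X^n in the formal power series exp(x·σ^p) ∈ ℝ⟦X⟧ equals Σ_{m=0}^n S^p_{n,m}·x^m. In other words, the n-th higher order Bell polynomial B_n^p(x) := n!·[X^n] (e^{σ^p})^x coincides with the polynomial Σ_{m=0}^n S^p_{n,m}·x^m obtained by applying the p-th power of the Stirling matrix to the column of powers of x. -/

import Mathlib

/-- Stirling numbers of the second kind. -/
def S2 : ℕ → ℕ → ℕ
  | 0, 0 => 1
  | 0, _ + 1 => 0
  | _ + 1, 0 => 0
  | n + 1, m + 1 => (m + 1) * S2 n (m + 1) + S2 n m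

/-- Entries `S^p_{n,m}` of the `p`-th power of the Stirling matrix (for `p ≥ 1`;
the value at `p = 0` is junk). -/
def Sp : ℕ → ℕ → ℕ → ℕ
  | 0, _, _ => 0
  | 1, n, m => S2 n m
  | p + 2, n, m => ∑ k ∈ Finset.range (n + 1), S2 n k * Sp (p + 1) k m

/-- Composition `f ∘ g` of formal power series (the intended meaning when `g` has zero
constant term, in which case `coeff n (g ^ k) = 0` for `k > n`). -/
noncomputable def PSComp (f g : PowerSeries ℝ) : PowerSeries ℝ :=
  PowerSeries.mk fun n =>
    ∑ k ∈ Finset.range (n + 1), (PowerSeries.coeff k f) * (PowerSeries.coeff n (g ^ k))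

/-- `σ^p`, the `p`-fold compositional iterate of `exp X - 1` (with `σ^0 = X`). -/
noncomputable def sigmaP : ℕ → PowerSeries ℝ
  | 0 => PowerSeries.X
  | p + 1 => PSComp (sigmaP p) (PowerSeries.exp ℝ - 1)

/-- Higher order Bell polynomials: `B_n^0(x) = x^n`, `B_n^p(x) = ∑ S^p_{n,m} x^m`. -/
noncomputable def BellP : ℕ → ℕ → ℝ → ℝ
  | 0, n, x => x ^ n
  | p + 1, n, x => ∑ m ∈ Finset.range (n + 1), (Sp (p + 1) n m : ℝ) * x ^ m


-- vanishing of coefficients of powers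
lemma coeff_pow_zero_of_lt {g : PowerSeries ℝ} (hg : PowerSeries.constantCoeff g = 0) :
    ∀ k n : ℕ, n < k → PowerSeries.coeff n (g ^ k) = 0 := by
  intro k
  induction k with
  | zero => intro n hn; omega
  | succ k ih =>
    intro n hn
    rw [pow_succ, mul_comm, PowerSeries.coeff_mul]
    apply Finset.sum_eq_zero
    rintro ⟨a, b⟩ hab
    rw [Finset.HasAntidiagonal.mem_antidiagonal] at hab
    rcases Nat.eq_zero_or_pos a with h | h
    · subst h
      simp [PowerSeries.coeff_zero_eq_constantCoeff, hg]
    · have : b < k := by omega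
      rw [ih b this, mul_zero]

lemma coeff_PSComp (f g : PowerSeries ℝ) (n : ℕ) :
    PowerSeries.coeff n (PSComp f g) =
      ∑ k ∈ Finset.range (n + 1),
        (PowerSeries.coeff k f) * (PowerSeries.coeff n (g ^ k)) := by
  simp [PSComp]

lemma coeff_aeval {g : PowerSeries ℝ} (hg : PowerSeries.constantCoeff g = 0)
    (P : Polynomial ℝ) (n : ℕ) :
    PowerSeries.coeff n (Polynomial.aeval g P) =
      ∑ k ∈ Finset.range (n + 1), P.coeff k * PowerSeries.coeff n (g ^ k) := by
  rw [Polynomial.aeval_eq_sum_range' (n := max (P.natDegree + 1) (n + 1))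
    (by omega) g]
  rw [map_sum]
  simp only [map_smul, smul_eq_mul]
  rw [← Finset.sum_subset (Finset.range_subset_range.2 (le_max_right _ _))]
  intro k hk hk2
  rw [Finset.mem_range] at hk hk2
  rw [coeff_pow_zero_of_lt hg k n (by omega), mul_zero]
lemma coeff_mul_congr {A B A' B' : PowerSeries ℝ} {n : ℕ}
    (hA : ∀ m ≤ n, PowerSeries.coeff m A = PowerSeries.coeff m A')
    (hB : ∀ m ≤ n, PowerSeries.coeff m B = PowerSeries.coeff m B') :
    PowerSeries.coeff n (A * B) = PowerSeries.coeff n (A' * B') := by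
  rw [PowerSeries.coeff_mul, PowerSeries.coeff_mul]
  apply Finset.sum_congr rfl
  rintro ⟨a, b⟩ hab
  rw [Finset.HasAntidiagonal.mem_antidiagonal] at hab
  rw [hA a (by omega), hB b (by omega)]

lemma coeff_pow_congr {A A' : PowerSeries ℝ} {n : ℕ}
    (hA : ∀ m ≤ n, PowerSeries.coeff m A = PowerSeries.coeff m A') (k : ℕ) :
    ∀ m ≤ n, PowerSeries.coeff m (A ^ k) = PowerSeries.coeff m (A' ^ k) := by
  induction k with
  | zero => intro m _; simp
  | succ k ih =>
    intro m hm
    rw [pow_succ, pow_succ]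
    exact coeff_mul_congr (fun j hj => ih j (le_trans hj hm))
      (fun j hj => hA j (le_trans hj hm))

/-- key coefficient formula for powers of a composition -/
lemma coeff_PSComp_pow {g : PowerSeries ℝ} (hg : PowerSeries.constantCoeff g = 0)
    (f : PowerSeries ℝ) (k n : ℕ) :
    PowerSeries.coeff n ((PSComp f g) ^ k) =
      ∑ j ∈ Finset.range (n + 1),
        PowerSeries.coeff j (f ^ k) * PowerSeries.coeff n (g ^ j) := by
  have h1 : ∀ m ≤ n, PowerSeries.coeff m (PSComp f g) =
      PowerSeries.coeff m (Polynomial.aeval g (PowerSeries.trunc (n + 1) f)) := by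
    intro m hm
    rw [coeff_PSComp, coeff_aeval hg]
    apply Finset.sum_congr rfl
    intro j hj
    rw [Finset.mem_range] at hj
    rw [PowerSeries.coeff_trunc]
    rw [if_pos (by omega)]
  rw [coeff_pow_congr h1 k n le_rfl, ← map_pow, coeff_aeval hg]
  apply Finset.sum_congr rfl
  intro j hj
  rw [Finset.mem_range] at hj
  congr 1
  -- `(trunc (n+1) f ^ k).coeff j = coeff j (f ^ k)` for `j ≤ n`
  have h2 : ∀ m ≤ n, PowerSeries.coeff m ((PowerSeries.trunc (n + 1) f : Polynomial ℝ) : PowerSeries ℝ)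
      = PowerSeries.coeff m f := by
    intro m hm
    rw [Polynomial.coeff_coe, PowerSeries.coeff_trunc, if_pos (by omega)]
  have := coeff_pow_congr h2 k j (by omega)
  rw [← this, ← Polynomial.coeff_coe, Polynomial.coe_pow]
lemma derivative_exp_real : PowerSeries.derivative ℝ (PowerSeries.exp ℝ) = PowerSeries.exp ℝ := by
  ext n
  rw [PowerSeries.coeff_derivative, PowerSeries.coeff_exp, PowerSeries.coeff_exp]
  have h1 : ((n + 1).factorial : ℝ) ≠ 0 := Nat.cast_ne_zero.2 (Nat.factorial_ne_zero _)
  have h2 : ((n).factorial : ℝ) ≠ 0 := Nat.cast_ne_zero.2 (Nat.factorial_ne_zero _)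
  simp only [eq_ratCast, Rat.cast_div, Rat.cast_one, Rat.cast_natCast]
  rw [Nat.factorial_succ]
  push_cast
  field_simp

/-- abbreviation for `exp - 1` -/
noncomputable def Eser : PowerSeries ℝ := PowerSeries.exp ℝ - 1

lemma constantCoeff_Eser : PowerSeries.constantCoeff Eser = 0 := by
  simp [Eser, PowerSeries.constantCoeff_exp]

lemma derivative_Eser : PowerSeries.derivative ℝ Eser = Eser + 1 := by
  unfold Eser
  rw [map_sub, derivative_exp_real]
  simp

/-- Base case: `n! [X^n] (exp - 1)^k = k! S2 n k`. -/
lemma base_stirling : ∀ n k : ℕ,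
    (n.factorial : ℝ) * PowerSeries.coeff n (Eser ^ k) = (k.factorial : ℝ) * S2 n k := by
  intro n
  induction n with
  | zero =>
    intro k
    rw [PowerSeries.coeff_zero_eq_constantCoeff, map_pow, constantCoeff_Eser]
    cases k with
    | zero => simp [S2]
    | succ k => simp [S2, zero_pow]
  | succ n ih =>
    intro k
    have hd : PowerSeries.coeff n (PowerSeries.derivative ℝ (Eser ^ k))
        = PowerSeries.coeff (n + 1) (Eser ^ k) * (n + 1) := PowerSeries.coeff_derivative _ _
    have key : ((n + 1).factorial : ℝ) * PowerSeries.coeff (n + 1) (Eser ^ k)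
        = (n.factorial : ℝ) * PowerSeries.coeff n (PowerSeries.derivative ℝ (Eser ^ k)) := by
      rw [hd, Nat.factorial_succ]
      push_cast
      ring
    rw [key]
    cases k with
    | zero =>
      simp [S2]
    | succ m =>
      have hD : PowerSeries.derivative ℝ (Eser ^ (m + 1))
          = (m + 1 : ℝ) • (Eser ^ (m + 1) + Eser ^ m) := by
        rw [Derivation.leibniz_pow]
        rw [derivative_Eser]
        simp only [Nat.add_sub_cancel]
        simp only [smul_eq_mul, nsmul_eq_mul, PowerSeries.smul_eq_C_mul, map_add, map_one,
          map_natCast]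
        push_cast
        ring
      rw [hD, map_smul]
      have hrec : (S2 (n + 1) (m + 1) : ℝ) = (m + 1) * S2 n (m + 1) + S2 n m := by
        rw [show S2 (n + 1) (m + 1) = (m + 1) * S2 n (m + 1) + S2 n m from rfl]
        push_cast
        ring
      rw [hrec, map_add, smul_eq_mul]
      have h1 := ih (m + 1)
      have h2 := ih m
      have hfac : ((m + 1).factorial : ℝ) = (m + 1) * m.factorial := by
        rw [Nat.factorial_succ]; push_cast; ring
      rw [hfac] at h1 ⊢
      linear_combination ((m : ℝ) + 1) * h1 + ((m : ℝ) + 1) * h2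
lemma PSComp_X {g : PowerSeries ℝ} (hg : PowerSeries.constantCoeff g = 0) :
    PSComp PowerSeries.X g = g := by
  ext n
  rw [coeff_PSComp]
  cases n with
  | zero =>
    simp [PowerSeries.coeff_zero_eq_constantCoeff, hg]
  | succ m =>
    rw [Finset.sum_eq_single 1]
    · simp
    · intro k _ hk1
      rw [PowerSeries.coeff_X, if_neg hk1, zero_mul]
    · intro h
      simp at h

lemma sigmaP_one : sigmaP 1 = Eser := by
  show PSComp PowerSeries.X (PowerSeries.exp ℝ - 1) = Eser
  exact PSComp_X constantCoeff_Eser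

lemma key_stirling (p : ℕ) : 1 ≤ p → ∀ n k : ℕ,
    (n.factorial : ℝ) * PowerSeries.coeff n ((sigmaP p) ^ k) =
      (k.factorial : ℝ) * Sp p n k := by
  induction p with
  | zero => omega
  | succ p ih =>
    intro _ n k
    cases p with
    | zero =>
      rw [sigmaP_one, show Sp 1 n k = S2 n k from rfl]
      exact base_stirling n k
    | succ q =>
      have hσ : sigmaP (q + 2) = PSComp (sigmaP (q + 1)) Eser := rfl
      rw [hσ, coeff_PSComp_pow constantCoeff_Eser, Finset.mul_sum]
      rw [show Sp (q + 2) n k = ∑ j ∈ Finset.range (n + 1), S2 n j * Sp (q + 1) j k from rfl]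
      rw [Nat.cast_sum, Finset.mul_sum]
      apply Finset.sum_congr rfl
      intro j hj
      have hb := base_stirling n j
      have hi := ih (by omega) j k
      push_cast
      linear_combination (PowerSeries.coeff j ((sigmaP (q + 1)) ^ k)) * hb
        + (S2 n j : ℝ) * hi


/-- The higher order Bell polynomial `B_n^p(x) = n!·[X^n] exp(x·σ^p)` coincides with
`∑_{m=0}^n S^p_{n,m} x^m`. -/
theorem bell_poly_eq_stirling_power_sum (p : ℕ) (hp : 1 ≤ p) (x : ℝ) (n : ℕ) :
    (n.factorial : ℝ) *
        PowerSeries.coeff n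
          (PSComp (PowerSeries.exp ℝ) (PowerSeries.C x * sigmaP p)) =
      ∑ m ∈ Finset.range (n + 1), (Sp p n m : ℝ) * x ^ m := by
  rw [coeff_PSComp, Finset.mul_sum]
  apply Finset.sum_congr rfl
  intro k hk
  have hkey := key_stirling p hp n k
  have hk0 : (k.factorial : ℝ) ≠ 0 := Nat.cast_ne_zero.2 (Nat.factorial_ne_zero _)
  rw [mul_pow, ← map_pow, PowerSeries.coeff_exp]
  have hC : PowerSeries.coeff n (PowerSeries.C (x ^ k) * (sigmaP p) ^ k)
      = x ^ k * PowerSeries.coeff n ((sigmaP p) ^ k) := by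
    rw [← PowerSeries.smul_eq_C_mul, map_smul, smul_eq_mul]
  rw [hC]
  simp only [eq_ratCast, Rat.cast_div, Rat.cast_one, Rat.cast_natCast]
  field_simp
  linear_combination x ^ k * hkey
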